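/- Let T be a dagger Frobenius monad on a dagger category C, and let (A, a) and (B, b) be Frobenius–Eilenberg–Moore algebras for T, i.e. Eilenberg–Moore algebras additionally satisfying T(a) ∘ μ_A† = μ_A ∘ T(a)† (equivalently T(a) ∘ μ†_{A} is self-adjoint). If f : A ⟶ B satisfies b ∘ T(f) = f ∘ a (an algebra homomorphism), then f† : B ⟶ A satisfies a ∘ T(f†) = f† ∘ b, i.e. f† is an algebra homomorphism (B,b) ⟶ (A,a). -/
import Mathlib


open CategoryTheory

/-- A dagger on a category: an involutive, identity-on-objects, contravariant endofunctor. -/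
class DaggerCategory (C : Type*) [Category C] where
  dag : ∀ {A B : C}, (A ⟶ B) → (B ⟶ A)
  dag_id : ∀ (A : C), dag (𝟙 A) = 𝟙 A
  dag_comp : ∀ {A B D : C} (f : A ⟶ B) (g : B ⟶ D), dag (f ≫ g) = dag g ≫ dag f
  dag_dag : ∀ {A B : C} (f : A ⟶ B), dag (dag f) = f

open DaggerCategory
/-- The dagger of a homomorphism of Frobenius–Eilenberg–Moore algebras is again a
homomorphism, in the opposite direction. -/
theorem fem_hom_dagger {C : Type*} [Category C] [DaggerCategory C] (T : Monad C)
    (hT : ∀ {A B : C} (f : A ⟶ B), T.map (dag f) = dag (T.map f))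
    (hfrob : ∀ A : C,
      dag (T.μ.app (T.obj A)) ≫ T.map (T.μ.app A)
        = T.map (dag (T.μ.app A)) ≫ T.μ.app (T.obj A))
    {A B : C} (a : T.obj A ⟶ A) (b : T.obj B ⟶ B)
    (ha₁ : T.η.app A ≫ a = 𝟙 A) (ha₂ : T.map a ≫ a = T.μ.app A ≫ a)
    (hb₁ : T.η.app B ≫ b = 𝟙 B) (hb₂ : T.map b ≫ b = T.μ.app B ≫ b)
    (haF : dag (T.map a) ≫ T.μ.app A = dag (T.μ.app A) ≫ T.map a)
    (hbF : dag (T.map b) ≫ T.μ.app B = dag (T.μ.app B) ≫ T.map b)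
    (f : A ⟶ B) (hf : T.map f ≫ b = a ≫ f) :
    T.map (dag f) ≫ a = b ≫ dag f := by
  -- dagger of η-naturality: for g : X ⟶ Y, dag η_X ≫ g = T g ≫ dag η_Y
  have hdagη : ∀ {X Y : C} (g : X ⟶ Y),
      dag (T.η.app X) ≫ g = T.map g ≫ dag (T.η.app Y) := by
    intro X Y g
    have h := T.η.naturality (dag g)
    -- h : (𝟭 C).map (dag g) ≫ T.η.app X = T.η.app Y ≫ T.map (dag g)
    simp only [Functor.id_map] at h
    have h2 := congrArg dag h
    simp only [dag_comp, hT, dag_dag] at h2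
    exact h2
  -- dagger of μ-naturality: for g : X ⟶ Y, dag μ_X ≫ T (T g) = T g ≫ dag μ_Y
  have hdagμ : ∀ {X Y : C} (g : X ⟶ Y),
      dag (T.μ.app X) ≫ T.map (T.map g) = T.map g ≫ dag (T.μ.app Y) := by
    intro X Y g
    have h := T.μ.naturality (dag g)
    -- h : (T ⋙ T).map (dag g) ≫ T.μ.app X = T.μ.app Y ≫ T.map (dag g)
    simp only [Functor.comp_map] at h
    have h2 := congrArg dag h
    simp only [dag_comp, hT, dag_dag] at h2
    exact h2
  -- key expansion: for a FEM algebra x, dag x = η_X ≫ dag μ_X ≫ T x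
  have hexp : ∀ {X : C} (x : T.obj X ⟶ X),
      (dag (T.map x) ≫ T.μ.app X = dag (T.μ.app X) ≫ T.map x) →
      dag x = T.η.app X ≫ dag (T.μ.app X) ≫ T.map x := by
    intro X x hxF
    have h1 : x = dag (T.μ.app X) ≫ T.map x ≫ dag (T.η.app X) := by
      calc x = 𝟙 (T.obj X) ≫ x := by rw [Category.id_comp]
        _ = dag (T.η.app (T.obj X) ≫ T.μ.app X) ≫ x := by rw [T.left_unit, dag_id]; rfl
        _ = dag (T.μ.app X) ≫ dag (T.η.app (T.obj X)) ≫ x := by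
            rw [dag_comp, Category.assoc]
        _ = dag (T.μ.app X) ≫ T.map x ≫ dag (T.η.app X) := by rw [hdagη x]
    have h2 := congrArg dag h1
    simp only [dag_comp, dag_dag] at h2
    calc dag x = T.η.app X ≫ dag (T.map x) ≫ T.μ.app X := by
          rw [h2]; simp only [Category.assoc]
      _ = T.η.app X ≫ dag (T.μ.app X) ≫ T.map x := by rw [hxF]
  -- daggered goal: dag a ≫ T f = f ≫ dag b
  have key : dag a ≫ T.map f = f ≫ dag b := by
    calc dag a ≫ T.map f
        = (T.η.app A ≫ dag (T.μ.app A) ≫ T.map a) ≫ T.map f := by rw [hexp a haF]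
      _ = T.η.app A ≫ dag (T.μ.app A) ≫ T.map (a ≫ f) := by
          simp only [Category.assoc, Functor.map_comp]
      _ = T.η.app A ≫ dag (T.μ.app A) ≫ T.map (T.map f ≫ b) := by rw [hf]
      _ = T.η.app A ≫ (dag (T.μ.app A) ≫ T.map (T.map f)) ≫ T.map b := by
          simp only [Functor.map_comp, Category.assoc]
      _ = T.η.app A ≫ (T.map f ≫ dag (T.μ.app B)) ≫ T.map b := by rw [hdagμ f]
      _ = (T.η.app A ≫ T.map f) ≫ dag (T.μ.app B) ≫ T.map b := by
          simp only [Category.assoc]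
      _ = (f ≫ T.η.app B) ≫ dag (T.μ.app B) ≫ T.map b := by
          rw [← T.η.naturality f]; simp
      _ = f ≫ dag b := by rw [hexp b hbF]; simp only [Category.assoc]
  have h := congrArg dag key
  simp only [dag_comp, dag_dag] at h
  rw [hT]
  exact h
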